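/- arXiv:1608.00543 — 4 statements merged into one kernel-verified Lean document; each statement's English description precedes it below -/
import Mathlib

section
/- For any rational number r in (0,1), there exist unique integers a_1,...,a_n, all at most -2, such that -1/r equals the negative continued fraction a_1 - 1/(a_2 - 1/(... - 1/a_n)). -/
/-- Negative continued fraction: `ncf [a] = a`, `ncf (a :: l) = a - 1 / ncf l`.
(Since `1/0 = 0` in `ℚ`, the singleton case is subsumed by the cons case.) -/
def ncf : List ℤ → ℚ
  | [] => 0
  | a :: l => (a : ℚ) - 1 / ncf l

lemma ncf_bounds : ∀ (l : List ℤ) (a : ℤ), (∀ b ∈ l, b ≤ -2) →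
    (a : ℚ) ≤ ncf (a :: l) ∧ ncf (a :: l) < a + 1 := by
  intro l
  induction l with
  | nil => intro a _; simp [ncf]
  | cons b t ih =>
    intro a h
    have hb : b ≤ -2 := h b (by simp)
    have ht : ∀ c ∈ t, c ≤ -2 := fun c hc => h c (by simp [hc])
    obtain ⟨h1, h2⟩ := ih b ht
    have hlt : ncf (b :: t) < -1 := by
      have : (b : ℚ) + 1 ≤ -1 := by
        have : (b : ℚ) ≤ -2 := by exact_mod_cast hb
        linarith
      linarith
    have hx0 : ncf (b :: t) < 0 := by linarith
    have hneg : 1 / ncf (b :: t) < 0 := by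
      exact one_div_neg.mpr hx0
    have hgt : -1 < 1 / ncf (b :: t) := by
      rw [lt_div_iff_of_neg hx0]
      linarith
    constructor
    · show (a : ℚ) ≤ (a : ℚ) - 1 / ncf (b :: t)
      linarith
    · show (a : ℚ) - 1 / ncf (b :: t) < a + 1
      linarith

lemma ncf_lt_neg_one (l : List ℤ) (hne : l ≠ []) (h : ∀ a ∈ l, a ≤ -2) :
    ncf l < -1 := by
  cases l with
  | nil => exact absurd rfl hne
  | cons a t =>
    have ha : a ≤ -2 := h a (by simp)
    have := (ncf_bounds t a (fun c hc => h c (by simp [hc]))).2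
    have : ((a : ℚ)) + 1 ≤ -1 := by
      have : (a : ℚ) ≤ -2 := by exact_mod_cast ha
      linarith
    linarith [(ncf_bounds t a (fun c hc => h c (by simp [hc]))).2]

lemma ncf_ne_zero (l : List ℤ) (hne : l ≠ []) (h : ∀ a ∈ l, a ≤ -2) :
    ncf l ≠ 0 := by
  have := ncf_lt_neg_one l hne h
  intro h0; rw [h0] at this; linarith

lemma ncf_floor (l : List ℤ) (a : ℤ) (h : ∀ b ∈ l, b ≤ -2) :
    ⌊ncf (a :: l)⌋ = a := by
  obtain ⟨h1, h2⟩ := ncf_bounds l a h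
  exact Int.floor_eq_iff.mpr ⟨h1, by exact_mod_cast h2⟩

lemma ncf_inj : ∀ (l1 l2 : List ℤ), l1 ≠ [] → l2 ≠ [] →
    (∀ a ∈ l1, a ≤ -2) → (∀ a ∈ l2, a ≤ -2) → ncf l1 = ncf l2 → l1 = l2 := by
  intro l1
  induction l1 with
  | nil => intro l2 h; exact absurd rfl h
  | cons a t ih =>
    intro l2 _ hne2 h1 h2 heq
    cases l2 with
    | nil => exact absurd rfl hne2
    | cons b s =>
      have ht : ∀ c ∈ t, c ≤ -2 := fun c hc => h1 c (by simp [hc])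
      have hs : ∀ c ∈ s, c ≤ -2 := fun c hc => h2 c (by simp [hc])
      have hab : a = b := by
        have := ncf_floor t a ht
        have := ncf_floor s b hs
        rw [heq] at *
        omega
      subst hab
      have htail : 1 / ncf t = 1 / ncf s := by
        have : (a : ℚ) - 1 / ncf t = (a : ℚ) - 1 / ncf s := heq
        linarith
      cases t with
      | nil =>
        cases s with
        | nil => rfl
        | cons c u =>
          exfalso
          have hns : ncf (c :: u) ≠ 0 := ncf_ne_zero _ (by simp) hs
          have : 1 / ncf (c :: u) = 0 := by simpa [ncf] using htail.symm
          exact hns (by field_simp at this; simp at this)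
      | cons c u =>
        cases s with
        | nil =>
          exfalso
          have hnt : ncf (c :: u) ≠ 0 := ncf_ne_zero _ (by simp) ht
          have : 1 / ncf (c :: u) = 0 := by simpa [ncf] using htail
          exact hnt (by field_simp at this; simp at this)
        | cons d v =>
          have hnt : ncf (c :: u) ≠ 0 := ncf_ne_zero _ (by simp) ht
          have hns : ncf (d :: v) ≠ 0 := ncf_ne_zero _ (by simp) hs
          have : ncf (c :: u) = ncf (d :: v) := by
            field_simp at htail
            linarith
          rw [ih (d :: v) (by simp) (by simp) ht hs this]

lemma ncf_exists : ∀ (n : ℕ) (q : ℚ), q.den = n → q < -1 →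
    ∃ l : List ℤ, l ≠ [] ∧ (∀ a ∈ l, a ≤ -2) ∧ ncf l = q := by
  intro n
  induction n using Nat.strong_induction_on with
  | _ n ih =>
    intro q hden hq
    set a := ⌊q⌋ with ha
    have haq : (a : ℚ) ≤ q := Int.floor_le q
    have haq2 : q < a + 1 := Int.lt_floor_add_one q
    have ha2 : a ≤ -2 := by
      have : (a : ℚ) < -1 := lt_of_le_of_lt haq hq
      have : a < -1 := by exact_mod_cast this
      omega
    by_cases hqa : q = a
    · refine ⟨[a], by simp, by simp [ha2], ?_⟩
      simp [ncf, hqa]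
    · have hlt : (a : ℚ) < q := lt_of_le_of_ne haq (fun h => hqa h.symm)
      set x : ℚ := (a : ℚ) - q with hx
      have hx1 : -1 < x := by simp [hx]; linarith
      have hx0 : x < 0 := by simp [hx]; linarith
      set q' : ℚ := 1 / x with hq'
      have hq'lt : q' < -1 := by
        rw [hq', div_lt_iff_of_neg hx0]
        linarith
      -- denominator decreases
      set m : ℤ := q.num - a * q.den with hm
      have hm0 : 0 < m := by
        have : (a : ℚ) * q.den < q.num := by
          have := hlt
          rw [← Rat.num_div_den q] at this
          have hd : (0 : ℚ) < q.den := by exact_mod_cast q.pos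
          rw [lt_div_iff₀ hd] at this
          exact this
        have : ((a * q.den : ℤ) : ℚ) < (q.num : ℚ) := by push_cast; linarith
        exact_mod_cast sub_pos.mpr (by exact_mod_cast this)
      have hmlt : m < q.den := by
        have : q.num < ((a : ℚ) + 1) * q.den := by
          have := haq2
          rw [← Rat.num_div_den q] at this
          have hd : (0 : ℚ) < q.den := by exact_mod_cast q.pos
          rw [div_lt_iff₀ hd] at this
          exact this
        have : (q.num : ℚ) < ((a + 1) * q.den : ℤ) := by push_cast; linarith
        have h3 : q.num < (a + 1) * q.den := by exact_mod_cast this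
        have h4 : (a + 1) * (q.den : ℤ) = a * q.den + q.den := by ring
        omega
      have hd : (q.den : ℚ) ≠ 0 := by exact_mod_cast q.den_nz
      have hqd : q * (q.den : ℚ) = q.num := Rat.mul_den_eq_num q
      have hxval : x = ((-m : ℤ) : ℚ) / ((q.den : ℤ) : ℚ) := by
        rw [hx, hm, eq_div_iff (by exact_mod_cast q.den_nz)]
        push_cast
        linear_combination -hqd
      have hq'val : q' = ((q.den : ℤ) : ℚ) / ((-m : ℤ) : ℚ) := by
        rw [hq', hxval, one_div_div]
      have hdd := Rat.den_dvd ((q.den : ℤ)) (-m)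
      rw [Rat.divInt_eq_div, ← hq'val] at hdd
      have hle : (q'.den : ℤ) ≤ m := Int.le_of_dvd hm0 (dvd_neg.mp hdd)
      have hq'den : q'.den < n := by omega
      obtain ⟨l, hlne, hl2, hlval⟩ := ih q'.den hq'den q' rfl hq'lt
      refine ⟨a :: l, by simp, ?_, ?_⟩
      · intro b hb
        rcases List.mem_cons.mp hb with h | h
        · omega
        · exact hl2 b h
      · show (a : ℚ) - 1 / ncf l = q
        rw [hlval, hq', one_div_one_div, hx]
        ring

/-- Every rational `r ∈ (0,1)` has a unique negative continued fraction expansion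
`-1/r = [a_1, …, a_n]` with all entries at most `-2`. -/
theorem unique_negative_continued_fraction (r : ℚ) (h0 : 0 < r) (h1 : r < 1) :
    ∃! l : List ℤ, l ≠ [] ∧ (∀ a ∈ l, a ≤ -2) ∧ ncf l = -1 / r := by
  have hq : (-1 / r : ℚ) < -1 := by
    rw [div_lt_iff₀ h0]
    nlinarith
  obtain ⟨l, h1', h2', h3'⟩ := ncf_exists (-1 / r).den (-1 / r) rfl hq
  refine ⟨l, ⟨h1', h2', h3'⟩, ?_⟩
  rintro l' ⟨hne', hle', hval'⟩
  exact ncf_inj l' l hne' h1' hle' h2' (by rw [hval', h3'])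
end

section
/- Let r, s be rationals in (0,1) with r + s ≥ 1, and write -1/r = [a_1,...,a_n] and -1/s = [c_1,...,c_k] as negative continued fractions with all entries at most -2. Then there exist truncations [a_1,...,a_m] = -1/r' and [c_1,...,c_l] = -1/s' (with m ≤ n, l ≤ k, r' ∈ (0,1), s' ∈ (0,1)) such that r' + s' = 1. -/
lemma ncf_nil : ncf [] = 0 := rfl
lemma ncf_cons (a : ℤ) (l : List ℤ) : ncf (a :: l) = (a : ℚ) - 1 / ncf l := rfl

lemma ncf_lt_neg_one_s3 : ∀ (L : List ℤ), L ≠ [] → (∀ a ∈ L, a ≤ -2) → ncf L < -1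
  | [], h, _ => absurd rfl h
  | a :: l, _, hL => by
    have ha : (a : ℚ) ≤ -2 := by exact_mod_cast hL a (by simp)
    rcases eq_or_ne l [] with rfl | hl
    · rw [ncf_cons, ncf_nil]
      simp
      linarith
    · have ih := ncf_lt_neg_one_s3 l hl (fun x hx => hL x (by simp [hx]))
      have h0 : ncf l ≠ 0 := by linarith
      have hx : ncf l * (1 / ncf l) = 1 := by field_simp
      have h1 : -1 < 1 / ncf l := by nlinarith
      rw [ncf_cons]; linarith

lemma ncf_inv_bounds (L : List ℤ) (hL : L ≠ []) (h : ∀ a ∈ L, a ≤ -2) :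
    -1 < 1 / ncf L ∧ 1 / ncf L < 0 := by
  have ih := ncf_lt_neg_one_s3 L hL h
  have h0 : ncf L ≠ 0 := by linarith
  have hx : ncf L * (1 / ncf L) = 1 := by field_simp
  constructor
  · nlinarith
  · nlinarith

def Concl (A C : List ℤ) : Prop :=
  ∃ (m l : ℕ) (r' s' : ℚ), 1 ≤ m ∧ m ≤ A.length ∧ 1 ≤ l ∧ l ≤ C.length ∧
    0 < r' ∧ r' < 1 ∧ 0 < s' ∧ s' < 1 ∧
    ncf (A.take m) = -1 / r' ∧ ncf (C.take l) = -1 / s' ∧ r' + s' = 1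

lemma Concl.symm {A C : List ℤ} (h : Concl A C) : Concl C A := by
  obtain ⟨m, l, r', s', h1, h2, h3, h4, h5, h6, h7, h8, h9, h10, h11⟩ := h
  exact ⟨l, m, s', r', h3, h4, h1, h2, h7, h8, h5, h6, h10, h9, by linarith⟩

/-- Key reduction step when the head of `C` is `≤ -3`. -/
lemma reduce (r s : ℚ) (hr0 : 0 < r) (hr1 : r < 1) (hs0 : 0 < s) (hs1 : s < 1)
    (hrs : 1 ≤ r + s) (A : List ℤ) (c : ℤ) (C' : List ℤ)
    (hA : ∀ a ∈ A, a ≤ -2) (hC : ∀ x ∈ c :: C', x ≤ -2)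
    (eA : ncf A = -1 / r) (eC : ncf (c :: C') = -1 / s) (hc : c ≤ -3)
    (ih : ∀ (r₁ s₁ : ℚ) (A₁ C₁ : List ℤ), 0 < r₁ → r₁ < 1 → 0 < s₁ → s₁ < 1 →
      1 ≤ r₁ + s₁ → (∀ a ∈ A₁, a ≤ -2) → (∀ x ∈ C₁, x ≤ -2) →
      ncf A₁ = -1 / r₁ → ncf C₁ = -1 / s₁ →
      A₁.length + C₁.length + 1 = A.length + (c :: C').length → Concl A₁ C₁) :
    Concl A (c :: C') := by
  have hcQ : (c : ℚ) ≤ -3 := by exact_mod_cast hc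
  -- ncf (c :: C') < -2
  have hC2 : ncf (c :: C') < -2 := by
    rcases eq_or_ne C' [] with rfl | hC'
    · rw [ncf_cons, ncf_nil]; simp; linarith
    · obtain ⟨hb1, hb2⟩ := ncf_inv_bounds C' hC' (fun x hx => hC x (by simp [hx]))
      rw [ncf_cons]; linarith
  -- s < 1/2
  have hs2 : s < 1/2 := by
    rw [eC] at hC2
    rw [div_lt_iff₀ hs0] at hC2
    linarith
  have hrhalf : 1/2 < r := by linarith
  -- r-side structure: A = -2 :: A' with A' ≠ []
  have hnA : -2 < ncf A := by
    rw [eA]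
    rw [neg_div, neg_lt_neg_iff]
    rw [div_lt_iff₀ hr0]; linarith
  have hAne : A ≠ [] := by
    intro h; rw [h, ncf_nil] at hnA
    have : ncf A < -1 := by rw [eA, neg_div, neg_lt]; rw [lt_div_iff₀ hr0]; linarith
    rw [h, ncf_nil] at this; linarith
  obtain ⟨a, A', rfl⟩ : ∃ a A', A = a :: A' := by
    cases A with
    | nil => exact absurd rfl hAne
    | cons a A' => exact ⟨a, A', rfl⟩
  have haQ : (a : ℚ) ≤ -2 := by exact_mod_cast hA a (by simp)
  have hA'ne : A' ≠ [] := by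
    intro h; rw [h, ncf_cons, ncf_nil] at hnA; simp at hnA; linarith
  obtain ⟨hb1, hb2⟩ := ncf_inv_bounds A' hA'ne (fun x hx => hA x (by simp [hx]))
  have ha2 : a = -2 := by
    have : (-3 : ℚ) < a := by rw [ncf_cons] at hnA; linarith
    have h3 : (-3 : ℤ) < a := by exact_mod_cast this
    have h4 : a ≤ -2 := hA a (by simp)
    omega
  subst ha2
  have hncfA' : ncf A' < -1 := ncf_lt_neg_one_s3 A' hA'ne (fun x hx => hA x (by simp [hx]))
  -- define r₁, s̃
  set r₁ : ℚ := 2 - 1/r with hr₁def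
  have hinvr1 : 1 < 1/r := by rw [lt_div_iff₀ hr0]; linarith
  have hinvr2 : 1/r < 2 := by rw [div_lt_iff₀ hr0]; linarith
  have hr₁0 : 0 < r₁ := by rw [hr₁def]; linarith
  have hr₁1 : r₁ < 1 := by rw [hr₁def]; linarith
  have eA' : ncf A' = -1 / r₁ := by
    have e1 : (1:ℚ) / ncf A' = 1/r - 2 := by
      rw [ncf_cons] at eA
      push_cast at eA
      rw [neg_div] at eA
      linarith
    have : ncf A' = 1 / (1/r - 2) := by rw [← e1, one_div_one_div]
    rw [this, hr₁def]
    rw [div_eq_div_iff (by linarith : (1:ℚ)/r - 2 ≠ 0) (by intro h; rw [sub_eq_zero] at h; linarith [h.symm] : (2:ℚ) - 1/r ≠ 0)]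
    ring
  set st : ℚ := s / (1 - s) with hstdef
  have h1s : (0:ℚ) < 1 - s := by linarith
  have hst0 : 0 < st := div_pos hs0 h1s
  have hst1 : st < 1 := by rw [hstdef, div_lt_one h1s]; linarith
  have eCt : ncf ((c + 1) :: C') = -1 / st := by
    have : ncf ((c + 1) :: C') = ncf (c :: C') + 1 := by
      rw [ncf_cons, ncf_cons]; push_cast; ring
    rw [this, eC, hstdef]
    have : s ≠ 0 := ne_of_gt hs0
    have : 1 - s ≠ 0 := ne_of_gt h1s
    field_simp
    ring
  have hsum : 1 ≤ r₁ + st := by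
    rw [← sub_nonneg]
    have he : r₁ + st - 1 = (r + s - 1) / (r * (1 - s)) := by
      rw [hr₁def, hstdef]
      have : r ≠ 0 := ne_of_gt hr0
      have : 1 - s ≠ 0 := ne_of_gt h1s
      field_simp
      ring
    rw [he]
    exact div_nonneg (by linarith) (mul_pos hr0 h1s).le
  -- apply the inductive hypothesis
  have hA' : ∀ x ∈ A', x ≤ -2 := fun x hx => hA x (by simp [hx])
  have hCt : ∀ x ∈ (c + 1) :: C', x ≤ -2 := by
    intro x hx
    rcases List.mem_cons.mp hx with rfl | hx
    · omega
    · exact hC x (by simp [hx])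
  have hlen : A'.length + ((c + 1) :: C').length + 1
      = (-2 :: A').length + (c :: C').length := by simp; omega
  obtain ⟨m', l', r'', s'', hm1, hm2, hl1, hl2, hr''0, hr''1, hs''0, hs''1, er'', es'', hsum''⟩ :=
    ih r₁ st A' ((c + 1) :: C') hr₁0 hr₁1 hst0 hst1 hsum hA' hCt eA' eCt hlen
  -- lift back
  have hr''ne : r'' ≠ 0 := ne_of_gt hr''0
  have h2r : (0:ℚ) < 2 - r'' := by linarith
  have h1s'' : (0:ℚ) < 1 + s'' := by linarith
  refine ⟨m' + 1, l', 1 / (2 - r''), s'' / (1 + s''), by omega, by simp; omega, hl1,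
    by simpa using hl2, ?_, ?_, ?_, ?_, ?_, ?_, ?_⟩
  · positivity
  · rw [div_lt_one h2r]; linarith
  · positivity
  · rw [div_lt_one h1s'']; linarith
  · rw [List.take_succ_cons, ncf_cons, er'']
    push_cast
    have : 2 - r'' ≠ 0 := ne_of_gt h2r
    field_simp
    ring
  · obtain ⟨l'', rfl⟩ : ∃ l'', l' = l'' + 1 := ⟨l' - 1, by omega⟩
    have eq1 : ncf ((c :: C').take (l'' + 1)) = ncf (((c + 1) :: C').take (l'' + 1)) - 1 := by
      rw [List.take_succ_cons, List.take_succ_cons, ncf_cons, ncf_cons]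
      push_cast; ring
    rw [eq1, es'']
    have : s'' ≠ 0 := ne_of_gt hs''0
    have : 1 + s'' ≠ 0 := ne_of_gt h1s''
    field_simp
    ring
  · have : s'' = 1 - r'' := by linarith
    subst this
    have : 2 - r'' ≠ 0 := ne_of_gt h2r
    field_simp
    ring

/-- Lecuona–Lisca, Lemma 3.2: if `r + s ≥ 1` with `r, s ∈ (0,1)` and
`-1/r = [a_1,…,a_n]`, `-1/s = [c_1,…,c_k]` (entries `≤ -2`), then there are
truncations `[a_1,…,a_m] = -1/r'` and `[c_1,…,c_l] = -1/s'` with `r' + s' = 1`. -/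
theorem exists_truncations_summing_to_one (r s : ℚ)
    (hr0 : 0 < r) (hr1 : r < 1) (hs0 : 0 < s) (hs1 : s < 1) (hrs : 1 ≤ r + s)
    (A C : List ℤ) (hA : ∀ a ∈ A, a ≤ -2) (hC : ∀ c ∈ C, c ≤ -2)
    (eA : ncf A = -1 / r) (eC : ncf C = -1 / s) :
    ∃ (m l : ℕ) (r' s' : ℚ), 1 ≤ m ∧ m ≤ A.length ∧ 1 ≤ l ∧ l ≤ C.length ∧
      0 < r' ∧ r' < 1 ∧ 0 < s' ∧ s' < 1 ∧
      ncf (A.take m) = -1 / r' ∧ ncf (C.take l) = -1 / s' ∧ r' + s' = 1 := by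
  suffices h : ∀ (N : ℕ) (r s : ℚ), 0 < r → r < 1 → 0 < s → s < 1 → 1 ≤ r + s →
      ∀ (A C : List ℤ), (∀ a ∈ A, a ≤ -2) → (∀ c ∈ C, c ≤ -2) →
      ncf A = -1 / r → ncf C = -1 / s → A.length + C.length ≤ N → Concl A C by
    exact h (A.length + C.length) r s hr0 hr1 hs0 hs1 hrs A C hA hC eA eC le_rfl
  intro N
  induction N with
  | zero =>
    intro r s hr0 _ _ _ _ A C _ _ eA _ hlen
    have : A = [] := by
      cases A with
      | nil => rfl
      | cons a A' => simp at hlen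
    rw [this, ncf_nil] at eA
    have : -1 / r < 0 := div_neg_of_neg_of_pos (by norm_num) hr0
    rw [← eA] at this; linarith
  | succ N ihN =>
    intro r s hr0 hr1 hs0 hs1 hrs A C hA hC eA eC hlen
    -- both lists nonempty
    have hAne : A ≠ [] := by
      intro h; rw [h, ncf_nil] at eA
      have : -1 / r < 0 := div_neg_of_neg_of_pos (by norm_num) hr0
      rw [← eA] at this; linarith
    have hCne : C ≠ [] := by
      intro h; rw [h, ncf_nil] at eC
      have : -1 / s < 0 := div_neg_of_neg_of_pos (by norm_num) hs0
      rw [← eC] at this; linarith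
    obtain ⟨a, A', rfl⟩ : ∃ a A', A = a :: A' := by
      cases A with
      | nil => exact absurd rfl hAne
      | cons a A' => exact ⟨a, A', rfl⟩
    obtain ⟨c, C', rfl⟩ : ∃ c C', C = c :: C' := by
      cases C with
      | nil => exact absurd rfl hCne
      | cons c C' => exact ⟨c, C', rfl⟩
    have ha : a ≤ -2 := hA a (by simp)
    have hc : c ≤ -2 := hC c (by simp)
    by_cases hac : a = -2 ∧ c = -2
    · obtain ⟨rfl, rfl⟩ := hac
      refine ⟨1, 1, 1/2, 1/2, le_rfl, by simp, le_rfl, by simp, by norm_num, by norm_num,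
        by norm_num, by norm_num, ?_, ?_, by norm_num⟩
      · rw [List.take_succ_cons, List.take_zero, ncf_cons, ncf_nil]; norm_num
      · rw [List.take_succ_cons, List.take_zero, ncf_cons, ncf_nil]; norm_num
    · have hcase : c ≤ -3 ∨ a ≤ -3 := by omega
      rcases hcase with hc3 | ha3
      · refine reduce r s hr0 hr1 hs0 hs1 hrs (a :: A') c C' hA hC eA eC hc3 ?_
        intro r₁ s₁ A₁ C₁ h1 h2 h3 h4 h5 h6 h7 h8 h9 h10
        exact ihN r₁ s₁ h1 h2 h3 h4 h5 A₁ C₁ h6 h7 h8 h9 (by simp at h10 hlen ⊢; omega)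
      · refine Concl.symm (reduce s r hs0 hs1 hr0 hr1 (by linarith) (c :: C') a A'
          hC hA eC eA ha3 ?_)
        intro r₁ s₁ A₁ C₁ h1 h2 h3 h4 h5 h6 h7 h8 h9 h10
        exact ihN r₁ s₁ h1 h2 h3 h4 h5 A₁ C₁ h6 h7 h8 h9 (by simp at h10 hlen ⊢; omega)
end

section
/- In the free abelian group generated by symbols D_S indexed by subsets S of a finite set H of holes with |S| ≥ 1 (convex Dehn twists up to conjugation in the abelianized planar mapping class group, with lantern relations imposed), every generator D_S with |S| = r ≥ 3 equals the sum of all pairwise generators D_{{α,β}} for α,β ∈ S minus (r-2) times the sum of boundary generators D_{{α}} over α ∈ S, weighted so that: D_S = Σ_{{α,β}⊆S} D_{{α,β}} - (r-2) Σ_{α∈S} D_{{α}}. -/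
/-- The free abelian group on convex Dehn twists `D_S`, indexed by nonempty subsets
`S` of a finite set `α` of holes. -/
abbrev TwistGroup (α : Type*) [DecidableEq α] : Type _ :=
  {S : Finset α // S.Nonempty} →₀ ℤ

/-- The generator `D_S` (zero if `S = ∅`). -/
noncomputable def Dg {α : Type*} [DecidableEq α] (S : Finset α) : TwistGroup α :=
  if h : S.Nonempty then Finsupp.single ⟨S, h⟩ 1 else 0

/-- Abelianized lantern relators:
`D_{A∪B∪C} + D_A + D_B + D_C - D_{A∪B} - D_{B∪C} - D_{A∪C}`
for pairwise disjoint nonempty `A, B, C`. -/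
noncomputable def lanternRelators (α : Type*) [DecidableEq α] : AddSubgroup (TwistGroup α) :=
  AddSubgroup.closure
    { x | ∃ A B C : Finset α, A.Nonempty ∧ B.Nonempty ∧ C.Nonempty ∧
        Disjoint A B ∧ Disjoint A C ∧ Disjoint B C ∧
        x = Dg (A ∪ B ∪ C) + Dg A + Dg B + Dg C - Dg (A ∪ B) - Dg (B ∪ C) - Dg (A ∪ C) }

section
variable {α : Type*} [DecidableEq α]

noncomputable def fD (S : Finset α) : TwistGroup α ⧸ lanternRelators α :=
  QuotientAddGroup.mk (Dg S)

lemma lantern {A B C : Finset α} (hA : A.Nonempty) (hB : B.Nonempty) (hC : C.Nonempty)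
    (hAB : Disjoint A B) (hAC : Disjoint A C) (hBC : Disjoint B C) :
    fD (A ∪ B ∪ C) = fD (A ∪ B) + fD (B ∪ C) + fD (A ∪ C) - fD A - fD B - fD C := by
  have hm : (Dg (A ∪ B ∪ C) + Dg A + Dg B + Dg C - Dg (A ∪ B) - Dg (B ∪ C) - Dg (A ∪ C) : TwistGroup α)
      ∈ lanternRelators α :=
    AddSubgroup.subset_closure ⟨A, B, C, hA, hB, hC, hAB, hAC, hBC, rfl⟩
  have h0 : (QuotientAddGroup.mk (Dg (A ∪ B ∪ C) + Dg A + Dg B + Dg C - Dg (A ∪ B) - Dg (B ∪ C) - Dg (A ∪ C)) : TwistGroup α ⧸ lanternRelators α) = 0 := by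
    rwa [QuotientAddGroup.eq_zero_iff]
  have := h0
  simp only [QuotientAddGroup.mk_add, QuotientAddGroup.mk_sub] at this
  unfold fD
  linear_combination (norm := abel) this


lemma sum_pairs_insert {a : α} {T : Finset α} (ha : a ∉ T) :
    ((insert a T).powersetCard 2).sum fD
      = (T.powersetCard 2).sum fD + T.sum (fun t => fD {a, t}) := by
  rw [show (2:ℕ) = Nat.succ 1 from rfl, Finset.powersetCard_succ_insert ha 1]
  rw [Finset.sum_union]
  · congr 1
    rw [Finset.sum_image, Finset.powersetCard_one, Finset.sum_map]
    · rfl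
    · intro s hs t ht hst
      have hs' : a ∉ s := fun h => ha ((Finset.mem_powersetCard.mp hs).1 h)
      have ht' : a ∉ t := fun h => ha ((Finset.mem_powersetCard.mp ht).1 h)
      rw [← Finset.erase_insert hs', ← Finset.erase_insert ht', hst]
  · rw [Finset.disjoint_right]
    intro s hs hs'
    obtain ⟨t, ht, rfl⟩ := Finset.mem_image.mp hs
    exact ha ((Finset.mem_powersetCard.mp hs').1 (Finset.mem_insert_self a t))

lemma key (S : Finset α) (hS : S.Nonempty) :
    fD S = (S.powersetCard 2).sum fD - ((S.card : ℤ) - 2) • S.sum (fun a => fD {a}) := by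
  induction S using Finset.strongInduction with
  | _ S IH =>
  rcases Nat.lt_or_ge S.card 3 with hlt | hge
  · interval_cases hc : S.card
    · have := Finset.card_pos.mpr hS; omega
    · obtain ⟨a, rfl⟩ := Finset.card_eq_one.mp hc
      have : ({a} : Finset α).powersetCard 2 = ∅ := by
        rw [Finset.powersetCard_eq_empty]; simp
      simp [this]
    · have : S.powersetCard 2 = {S} := by rw [← hc, Finset.powersetCard_self]
      simp [this]
  · obtain ⟨a, haS⟩ := hS
    have h2 : 2 ≤ (S.erase a).card := by
      have := Finset.card_erase_of_mem haS; omega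
    obtain ⟨b, hb⟩ := Finset.card_pos.mp (show 0 < (S.erase a).card by omega)
    set T := (S.erase a).erase b with hT
    have hba : b ≠ a := (Finset.mem_erase.mp hb).1
    have hbS : b ∈ S := (Finset.mem_erase.mp hb).2
    have haT : a ∉ T := fun h => (Finset.mem_erase.mp (Finset.mem_erase.mp h).2).1 rfl
    have hbT : b ∉ T := fun h => (Finset.mem_erase.mp h).1 rfl
    have hcardT : T.card + 2 = S.card := by
      rw [hT, Finset.card_erase_of_mem hb, Finset.card_erase_of_mem haS]; omega
    have hTne : T.Nonempty := Finset.card_pos.mp (by omega)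
    have hSeq : S = insert a (insert b T) := by
      rw [hT, Finset.insert_erase hb, Finset.insert_erase haS]
    have haT' : a ∉ insert b T := by simp [hba.symm, haT]
    -- lantern relation with A = {a}, B = {b}, C = T
    have hl := lantern (Finset.singleton_nonempty a) (Finset.singleton_nonempty b) hTne
      (Finset.disjoint_singleton.mpr (Ne.symm hba)) (Finset.disjoint_singleton_left.mpr haT)
      (Finset.disjoint_singleton_left.mpr hbT)
    simp only [Finset.insert_union, ← Finset.insert_eq] at hl
    rw [← hSeq] at hl
    -- induction hypotheses
    have hsub : insert b T ⊆ S := by rw [hSeq]; exact Finset.subset_insert _ _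
    have h1 : insert a T ⊂ S := by
      constructor
      · intro x hx
        rcases Finset.mem_insert.mp hx with rfl | hx
        · exact haS
        · exact hsub (Finset.mem_insert_of_mem hx)
      · intro hcon
        exact (by simp [hba, hbT] : b ∉ insert a T) (hcon hbS)
    have h2 : insert b T ⊂ S := by
      constructor
      · exact hsub
      · exact fun hcon => haT' (hcon haS)
    have h3 : T ⊂ S := lt_of_le_of_lt (Finset.subset_insert _ _) h2
    have e1 := IH _ h1 ⟨a, Finset.mem_insert_self _ _⟩
    have e2 := IH _ h2 ⟨b, Finset.mem_insert_self _ _⟩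
    have e3 := IH _ h3 hTne
    -- rewrite sums
    rw [sum_pairs_insert haT, Finset.sum_insert haT,
      Finset.card_insert_of_notMem haT] at e1
    rw [sum_pairs_insert hbT, Finset.sum_insert hbT,
      Finset.card_insert_of_notMem hbT] at e2
    rw [hl, e1, e2, e3]
    rw [hSeq, sum_pairs_insert haT', sum_pairs_insert hbT,
      Finset.sum_insert hbT, Finset.sum_insert haT', Finset.sum_insert hbT, ← hSeq]
    rw [← hcardT]
    push_cast
    have hfab : fD (insert a {b}) = fD {a, b} := rfl
    rw [hfab]
    module
end


/-- In the abelianization of the planar mapping class group (free abelian group on the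
`D_S` modulo lantern relations), every `D_S` with `|S| = r ≥ 3` equals the sum of all
pairwise generators over pairs in `S` minus `(r-2)` times the sum of boundary
generators over holes of `S`. -/
theorem twist_reduces_to_pairwise_and_boundary
    {α : Type*} [Fintype α] [DecidableEq α] (S : Finset α) (h : 3 ≤ S.card) :
    (QuotientAddGroup.mk (Dg S) : TwistGroup α ⧸ lanternRelators α) =
      QuotientAddGroup.mk
        ((S.powersetCard 2).sum Dg - ((S.card : ℤ) - 2) • S.sum fun a => Dg {a}) := by
  have hmk : (QuotientAddGroup.mk
      ((S.powersetCard 2).sum Dg - ((S.card : ℤ) - 2) • S.sum fun a => Dg {a}) :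
        TwistGroup α ⧸ lanternRelators α)
      = (S.powersetCard 2).sum fD - ((S.card : ℤ) - 2) • S.sum fun a => fD {a} := by
    rw [← QuotientAddGroup.mk'_apply, map_sub, map_zsmul, map_sum, map_sum]
    rfl
  rw [hmk]
  exact key S (Finset.card_pos.mp (by omega))
end

section
/- In the free abelian group on symbols D_S (nonempty subsets S of a finite hole set) modulo the abelianized lantern relations, the classes of the pairwise generators D_{{α,β}} and single-hole generators D_{{α}} form a basis; consequently an element of the abelianized planar mapping class group is uniquely determined by its multiplicities {m_α, m_{αβ}}. -/
section
variable {α : Type*} [DecidableEq α]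

abbrev Pairs (α : Type*) [DecidableEq α] := {S : Finset α // S.card = 1 ∨ S.card = 2}

noncomputable def sng (T : Finset α) : Pairs α →₀ ℤ :=
  if h : T.card = 1 ∨ T.card = 2 then Finsupp.single ⟨T, h⟩ 1 else 0

lemma sng_apply (T : Finset α) (U : Pairs α) : sng T U = if T = U.1 then 1 else 0 := by
  rcases U with ⟨U, hU⟩
  unfold sng
  split_ifs with h h2 h2
  · subst h2; simp
  · simp [Finsupp.single_apply, Subtype.ext_iff, h2]
  · exact absurd (h2 ▸ hU) h
  · rfl

noncomputable def red (S : Finset α) : Pairs α →₀ ℤ :=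
  ∑ T ∈ S.powerset, (if T.card = 2 then 1 else if T.card = 1 then 2 - (S.card : ℤ) else 0) • sng T

lemma red_apply (S : Finset α) (U : Pairs α) :
    red S U = if U.1 ⊆ S then (if U.1.card = 2 then 1 else 2 - (S.card : ℤ)) else 0 := by
  classical
  have : red S U = ∑ T ∈ S.powerset,
      (if T.card = 2 then (1:ℤ) else if T.card = 1 then 2 - (S.card : ℤ) else 0) *
        (if T = U.1 then 1 else 0) := by
    rw [red, Finsupp.finset_sum_apply]
    exact Finset.sum_congr rfl fun T _ => by rw [Finsupp.smul_apply, sng_apply, smul_eq_mul]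
  rw [this]
  rw [Finset.sum_congr rfl (fun T _ => by rw [mul_ite, mul_one, mul_zero]),
    Finset.sum_ite_eq' S.powerset U.1
      (fun T => if T.card = 2 then (1:ℤ) else if T.card = 1 then 2 - (S.card:ℤ) else 0)]
  rcases U with ⟨U, hU⟩
  simp only [Finset.mem_powerset]
  rcases hU with h1 | h2
  · simp [h1]
  · simp [h2]

lemma red_single (U : Pairs α) : red U.1 = Finsupp.single U 1 := by
  ext V
  rw [red_apply, Finsupp.single_apply]
  rcases U with ⟨U, hU⟩
  rcases V with ⟨V, hV⟩
  simp only [Subtype.mk.injEq]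
  by_cases hVU : U = V
  · subst hVU
    rcases hU with h1 | h2
    · simp [h1]
    · simp [h2]
  · rw [if_neg hVU]
    by_cases hsub : V ⊆ U
    · -- V ⊊ U, so V.card < U.card; with cards in {1,2}, V.card = 1, U.card = 2
      have hlt : V.card < U.card :=
        Finset.card_lt_card (Finset.ssubset_iff_subset_ne.2 ⟨hsub, fun h => hVU h.symm⟩)
      have hU2 : U.card = 2 := by omega
      rw [if_pos hsub, if_neg (by omega), hU2]
      norm_num
    · rw [if_neg hsub]

lemma red_lantern (A B C : Finset α) (hAB : Disjoint A B) (hAC : Disjoint A C)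
    (hBC : Disjoint B C) :
    red (A ∪ B ∪ C) + red A + red B + red C = red (A ∪ B) + red (B ∪ C) + red (A ∪ C) := by
  have cAB : (A ∪ B).card = A.card + B.card := Finset.card_union_of_disjoint hAB
  have cBC : (B ∪ C).card = B.card + C.card := Finset.card_union_of_disjoint hBC
  have cAC : (A ∪ C).card = A.card + C.card := Finset.card_union_of_disjoint hAC
  have cABC : (A ∪ B ∪ C).card = A.card + B.card + C.card := by
    rw [Finset.card_union_of_disjoint (by exact Finset.disjoint_union_left.2 ⟨hAC, hBC⟩), cAB]
  have dA := Finset.disjoint_left.mp hAB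
  have dA' := Finset.disjoint_left.mp hAC
  have dB := Finset.disjoint_left.mp hBC
  ext U
  simp only [Finsupp.add_apply, red_apply, cAB, cBC, cAC, cABC]
  rcases U with ⟨U, hU⟩
  rcases hU with h1 | h2
  · obtain ⟨u, rfl⟩ := Finset.card_eq_one.mp h1
    simp only [Finset.singleton_subset_iff, Finset.mem_union, h1]
    push_cast
    by_cases huA : u ∈ A <;> by_cases huB : u ∈ B <;> by_cases huC : u ∈ C <;>
      first
      | (exact (dA huA huB).elim)
      | (exact (dA' huA huC).elim)
      | (exact (dB huB huC).elim)
      | (simp only [huA, huB, huC, true_or, or_true, or_false, false_or,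
          if_true, if_false]; ring)
  · obtain ⟨x, y, hxy, rfl⟩ := Finset.card_eq_two.mp h2
    simp only [Finset.insert_subset_iff, Finset.singleton_subset_iff, Finset.mem_union, h2,
      if_true]
    by_cases hxA : x ∈ A <;> by_cases hxB : x ∈ B <;> by_cases hxC : x ∈ C <;>
      by_cases hyA : y ∈ A <;> by_cases hyB : y ∈ B <;> by_cases hyC : y ∈ C <;>
      first
      | (exact (dA hxA hxB).elim)
      | (exact (dA' hxA hxC).elim)
      | (exact (dB hxB hxC).elim)
      | (exact (dA hyA hyB).elim)
      | (exact (dA' hyA hyC).elim)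
      | (exact (dB hyB hyC).elim)
      | (simp only [hxA, hxB, hxC, hyA, hyB, hyC, true_or, or_true, or_false, false_or,
          true_and, false_and, and_true, and_false, if_true, if_false]; ring)

noncomputable def phi : TwistGroup α →ₗ[ℤ] (Pairs α →₀ ℤ) :=
  Finsupp.linearCombination ℤ (fun S : {S : Finset α // S.Nonempty} => red S.1)

lemma phi_Dg (S : Finset α) (h : S.Nonempty) : phi (Dg S) = red S := by
  rw [Dg, dif_pos h, phi, Finsupp.linearCombination_single, one_smul]

lemma phi_relators : ∀ x ∈ lanternRelators α, phi (x : TwistGroup α) = 0 := by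
  have : lanternRelators α ≤ (phi (α := α)).toAddMonoidHom.ker := by
    rw [lanternRelators]
    apply (AddSubgroup.closure_le _).2
    rintro x ⟨A, B, C, hA, hB, hC, hAB, hAC, hBC, rfl⟩
    have hABn : (A ∪ B).Nonempty := hA.mono Finset.subset_union_left
    have hBCn : (B ∪ C).Nonempty := hB.mono Finset.subset_union_left
    have hACn : (A ∪ C).Nonempty := hA.mono Finset.subset_union_left
    have hABCn : (A ∪ B ∪ C).Nonempty := hABn.mono Finset.subset_union_left
    show phi _ = 0
    rw [map_sub, map_sub, map_sub, map_add, map_add, map_add,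
      phi_Dg _ hA, phi_Dg _ hB, phi_Dg _ hC, phi_Dg _ hABn, phi_Dg _ hBCn, phi_Dg _ hACn,
      phi_Dg _ hABCn]
    have := red_lantern A B C hAB hAC hBC
    rw [sub_sub, sub_sub, sub_eq_zero, this]
    abel
  exact fun x hx => this hx

noncomputable def barphi : (TwistGroup α ⧸ lanternRelators α) →ₗ[ℤ] (Pairs α →₀ ℤ) :=
  (QuotientAddGroup.lift (lanternRelators α) (phi (α := α)).toAddMonoidHom
    phi_relators).toIntLinearMap

noncomputable def mkQ : TwistGroup α →ₗ[ℤ] (TwistGroup α ⧸ lanternRelators α) :=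
  (QuotientAddGroup.mk' (lanternRelators α)).toIntLinearMap

lemma barphi_mkQ (x : TwistGroup α) : barphi (mkQ x) = phi x := rfl

noncomputable def psi : (Pairs α →₀ ℤ) →ₗ[ℤ] (TwistGroup α ⧸ lanternRelators α) :=
  Finsupp.linearCombination ℤ (fun U : Pairs α => mkQ (Dg U.1))

lemma pairs_nonempty (U : Pairs α) : U.1.Nonempty := by
  rw [← Finset.card_pos]; rcases U.2 with h | h <;> omega

lemma barphi_psi (x : Pairs α →₀ ℤ) : barphi (psi x) = x := by
  induction x using Finsupp.induction_linear with
  | zero => simp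
  | add f g hf hg => rw [map_add, map_add, hf, hg]
  | single U c =>
    rw [psi, Finsupp.linearCombination_single, map_smul, barphi_mkQ,
      phi_Dg _ (pairs_nonempty U), red_single, Finsupp.smul_single, smul_eq_mul, mul_one]

lemma psi_surj : Function.Surjective (psi (α := α)) := by
  have key : ∀ n (S : Finset α), S.card ≤ n → S.Nonempty →
      mkQ (Dg S) ∈ LinearMap.range (psi (α := α)) := by
    intro n
    induction n with
    | zero =>
      intro S hS hne
      exact absurd (Finset.card_pos.2 hne) (by omega)
    | succ n ih =>
      intro S hS hne
      by_cases hc : S.card = 1 ∨ S.card = 2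
      · refine ⟨Finsupp.single ⟨S, hc⟩ 1, ?_⟩
        rw [psi, Finsupp.linearCombination_single, one_smul]
      · have h3 : 3 ≤ S.card := by
          have := Finset.card_pos.2 hne
          omega
        obtain ⟨a, ha⟩ := hne
        have hern : (S.erase a).Nonempty := by
          rw [← Finset.card_pos, Finset.card_erase_of_mem ha]; omega
        obtain ⟨b, hb⟩ := hern
        have hba : b ≠ a := Finset.ne_of_mem_erase hb
        have hbS : b ∈ S := Finset.mem_of_mem_erase hb
        set C := S \ {a, b} with hCdef
        have habS : ({a, b} : Finset α) ⊆ S := by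
          rw [Finset.insert_subset_iff, Finset.singleton_subset_iff]; exact ⟨ha, hbS⟩
        have hab2 : ({a, b} : Finset α).card = 2 := Finset.card_pair (Ne.symm hba)
        have hCcard : C.card = S.card - 2 := by
          rw [hCdef, Finset.card_sdiff_of_subset habS, hab2]
        have hCne : C.Nonempty := by rw [← Finset.card_pos]; omega
        have haC : a ∉ C := by simp [hCdef]
        have hbC : b ∉ C := by simp [hCdef]
        have hunion : {a} ∪ {b} ∪ C = S := by
          ext x
          simp only [Finset.mem_union, Finset.mem_singleton, hCdef, Finset.mem_sdiff,
            Finset.mem_insert]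
          constructor
          · rintro ((rfl | rfl) | ⟨hx, _⟩)
            · exact ha
            · exact hbS
            · exact hx
          · intro hx
            by_cases h1 : x = a
            · exact Or.inl (Or.inl h1)
            · by_cases h2 : x = b
              · exact Or.inl (Or.inr h2)
              · exact Or.inr ⟨hx, fun h => h.elim h1 h2⟩
        have hrel : (Dg S + Dg {a} + Dg {b} + Dg C - Dg ({a} ∪ {b}) - Dg ({b} ∪ C)
            - Dg ({a} ∪ C)) ∈ lanternRelators α := by
          apply AddSubgroup.subset_closure
          exact ⟨{a}, {b}, C, Finset.singleton_nonempty a, Finset.singleton_nonempty b, hCne,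
            by simpa using hba.symm,
            by simpa using haC,
            by simpa using hbC,
            by rw [hunion]⟩
        have h0 : mkQ (Dg S) + mkQ (Dg {a}) + mkQ (Dg {b}) + mkQ (Dg C)
            - mkQ (Dg ({a} ∪ {b})) - mkQ (Dg ({b} ∪ C)) - mkQ (Dg ({a} ∪ C)) = 0 := by
          rw [← map_add, ← map_add, ← map_add, ← map_sub, ← map_sub, ← map_sub]
          exact (QuotientAddGroup.eq_zero_iff _).2 hrel
        have hEq : mkQ (Dg S) =
            (mkQ (Dg ({a} ∪ {b})) + mkQ (Dg ({b} ∪ C)) + mkQ (Dg ({a} ∪ C))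
              - mkQ (Dg {a}) - mkQ (Dg {b}) - mkQ (Dg C))
            + (mkQ (Dg S) + mkQ (Dg {a}) + mkQ (Dg {b}) + mkQ (Dg C)
              - mkQ (Dg ({a} ∪ {b})) - mkQ (Dg ({b} ∪ C)) - mkQ (Dg ({a} ∪ C))) := by
          abel
        rw [hEq, h0, add_zero]
        have c1 : ({a} : Finset α).card ≤ n := by simp; omega
        have c2 : ({b} : Finset α).card ≤ n := by simp; omega
        have c3 : C.card ≤ n := by omega
        have c4 : ({a} ∪ {b} : Finset α).card ≤ n := by
          have : ({a} ∪ {b} : Finset α) = {a, b} := rfl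
          rw [this, hab2]; omega
        have c5 : ({b} ∪ C : Finset α).card ≤ n := by
          rw [show ({b} ∪ C : Finset α) = insert b C from rfl, Finset.card_insert_of_notMem hbC]; omega
        have c6 : ({a} ∪ C : Finset α).card ≤ n := by
          rw [show ({a} ∪ C : Finset α) = insert a C from rfl, Finset.card_insert_of_notMem haC]; omega
        have n1 : ({a} : Finset α).Nonempty := Finset.singleton_nonempty a
        have n2 : ({b} : Finset α).Nonempty := Finset.singleton_nonempty b
        have n4 : ({a} ∪ {b} : Finset α).Nonempty := n1.mono Finset.subset_union_left
        have n5 : ({b} ∪ C : Finset α).Nonempty := n2.mono Finset.subset_union_left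
        have n6 : ({a} ∪ C : Finset α).Nonempty := n1.mono Finset.subset_union_left
        exact sub_mem (sub_mem (sub_mem (add_mem (add_mem
          (ih _ c4 n4) (ih _ c5 n5)) (ih _ c6 n6))
          (ih _ c1 n1)) (ih _ c2 n2)) (ih _ c3 hCne)
  have hall : ∀ x : TwistGroup α ⧸ lanternRelators α, x ∈ LinearMap.range (psi (α := α)) := by
    intro x
    refine QuotientAddGroup.induction_on x ?_
    intro y
    show mkQ y ∈ LinearMap.range (psi (α := α))
    induction y using Finsupp.induction_linear with
    | zero => rw [map_zero]; exact zero_mem _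
    | add f g hf hg => rw [map_add]; exact add_mem hf hg
    | single i c =>
      have : (Finsupp.single i c : TwistGroup α) = c • Dg i.1 := by
        rw [Dg, dif_pos i.2, Finsupp.smul_single, smul_eq_mul, mul_one]
      rw [this, map_smul]
      exact Submodule.smul_mem _ _ (key i.1.card i.1 le_rfl i.2)
  intro x
  exact hall x


end

/-- The classes of the pairwise generators `D_{{a,b}}` and single-hole (boundary)
generators `D_{{a}}` form a `ℤ`-basis of the abelianized planar mapping class group;
consequently an element is uniquely determined by its multiplicities `{m_a, m_{ab}}`. -/
theorem pairwise_and_boundary_basis {α : Type*} [Fintype α] [DecidableEq α] :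
    ∃ b : Module.Basis {S : Finset α // S.card = 1 ∨ S.card = 2} ℤ
        (TwistGroup α ⧸ lanternRelators α),
      ∀ S : {S : Finset α // S.card = 1 ∨ S.card = 2},
        b S = QuotientAddGroup.mk (Dg S.1) := by
  have hinj : Function.Injective (psi (α := α)) :=
    Function.LeftInverse.injective barphi_psi
  let e : (Pairs α →₀ ℤ) ≃ₗ[ℤ] (TwistGroup α ⧸ lanternRelators α) :=
    LinearEquiv.ofBijective psi ⟨hinj, psi_surj⟩
  refine ⟨Module.Basis.ofRepr e.symm, fun S => ?_⟩
  show e.symm.symm (Finsupp.single S 1) = _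
  rw [LinearEquiv.symm_symm]
  show psi (Finsupp.single S 1) = _
  rw [psi, Finsupp.linearCombination_single, one_smul]
  rfl
end
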